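/- Fix x ≥ 0 and define f : ℕ → ℝ by f(n) = L_{n-1}^{(3/2)}(x) for n ≥ 1 and f(0) = 0, where L_n^{(α)} denotes the generalized Laguerre polynomial. Then for every integer n ≥ 1, 2n[f(n+1) − f(n)] + (2n+1)[f(n−1) − f(n)] = −2x f(n). -/

import Mathlib

open Finset

/-- Generalized binomial coefficient `binom(a, k) = a(a−1)⋯(a−k+1)/k!`. -/
noncomputable def genBinom (a : ℝ) (k : ℕ) : ℝ :=
  (∏ j ∈ Finset.range k, (a - j)) / (k.factorial : ℝ)

/-- The generalized Laguerre polynomial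
`L_n^{(α)}(x) = Σ_{i=0}^n (−1)^i binom(n+α, n−i) x^i / i!`. -/
noncomputable def laguerre (α : ℝ) (n : ℕ) (x : ℝ) : ℝ :=
  ∑ i ∈ Finset.range (n + 1),
    (-1:ℝ)^i * genBinom ((n:ℝ) + α) (n - i) * x ^ i / (i.factorial : ℝ)

lemma genBinom_zero (a : ℝ) : genBinom a 0 = 1 := by simp [genBinom]

lemma genBinom_succ (a : ℝ) (k : ℕ) :
    ((k:ℝ)+1) * genBinom a (k+1) = a * genBinom (a-1) k := by
  have h1 : ∏ j ∈ Finset.range (k+1), (a - (j:ℝ))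
      = (∏ j ∈ Finset.range k, ((a-1) - (j:ℝ))) * a := by
    rw [Finset.prod_range_succ']
    congr 1
    · exact Finset.prod_congr rfl (fun j _ => by push_cast; ring)
    · norm_num
  have hf : ((k+1).factorial : ℝ) = ((k:ℝ)+1) * (k.factorial : ℝ) := by
    rw [Nat.factorial_succ]; push_cast; ring
  have hk0 : ((k.factorial : ℝ)) ≠ 0 := by positivity
  have hk1 : ((k:ℝ)+1) ≠ 0 := by positivity
  simp only [genBinom, h1, hf]
  field_simp

lemma genBinom_pascal (a : ℝ) (k : ℕ) :
    genBinom (a+1) (k+1) = genBinom a (k+1) + genBinom a k := by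
  have h1 : ∏ j ∈ Finset.range (k+1), ((a+1) - (j:ℝ))
      = (∏ j ∈ Finset.range k, (a - (j:ℝ))) * (a+1) := by
    rw [Finset.prod_range_succ']
    congr 1
    · exact Finset.prod_congr rfl (fun j _ => by push_cast; ring)
    · norm_num
  have h2 : ∏ j ∈ Finset.range (k+1), (a - (j:ℝ))
      = (∏ j ∈ Finset.range k, (a - (j:ℝ))) * (a - k) := Finset.prod_range_succ _ _
  have hf : ((k+1).factorial : ℝ) = ((k:ℝ)+1) * (k.factorial : ℝ) := by
    rw [Nat.factorial_succ]; push_cast; ring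
  have hk0 : ((k.factorial : ℝ)) ≠ 0 := by positivity
  have hk1 : ((k:ℝ)+1) ≠ 0 := by positivity
  simp only [genBinom, h1, h2, hf]
  field_simp
  ring

lemma lagA (α x : ℝ) (n : ℕ) :
    laguerre α (n+1) x = laguerre (α+1) (n+1) x - laguerre (α+1) n x := by
  unfold laguerre
  rw [Finset.sum_range_succ, Finset.sum_range_succ (n := n+1)]
  rw [Nat.sub_self, genBinom_zero, genBinom_zero]
  have key : ∀ i ∈ Finset.range (n+1),
      (-1:ℝ)^i * genBinom ((↑(n+1):ℝ) + α) (n+1 - i) * x ^ i / (i.factorial : ℝ)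
      = (-1:ℝ)^i * genBinom ((↑(n+1):ℝ) + (α+1)) (n+1 - i) * x ^ i / (i.factorial : ℝ)
        - (-1:ℝ)^i * genBinom ((n:ℝ) + (α+1)) (n - i) * x ^ i / (i.factorial : ℝ) := by
    intro i hi
    have hi' : i ≤ n := Nat.lt_succ_iff.mp (Finset.mem_range.mp hi)
    have hsub : n + 1 - i = (n - i) + 1 := by omega
    have e1 : ((↑(n+1):ℝ) + (α+1)) = ((↑(n+1):ℝ) + α) + 1 := by ring
    have e2 : ((n:ℝ) + (α+1)) = ((↑(n+1):ℝ) + α) := by push_cast; ring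
    rw [hsub, e1, e2, genBinom_pascal]
    ring
  have hsum : ∑ i ∈ Finset.range (n+1),
      (-1:ℝ)^i * genBinom ((↑(n+1):ℝ) + α) (n+1 - i) * x ^ i / (i.factorial : ℝ)
      = ∑ i ∈ Finset.range (n+1),
        ((-1:ℝ)^i * genBinom ((↑(n+1):ℝ) + (α+1)) (n+1 - i) * x ^ i / (i.factorial : ℝ)
        - (-1:ℝ)^i * genBinom ((n:ℝ) + (α+1)) (n - i) * x ^ i / (i.factorial : ℝ)) :=
    Finset.sum_congr rfl key
  rw [hsum, Finset.sum_sub_distrib]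
  ring

lemma lagB (α x : ℝ) (n : ℕ) :
    ((n:ℝ)+1) * laguerre α (n+1) x + x * laguerre (α+1) n x
      = ((n:ℝ)+1+α) * laguerre α n x := by
  unfold laguerre
  rw [Finset.mul_sum, Finset.mul_sum, Finset.mul_sum]
  rw [Finset.sum_range_succ' _ (n+1), Finset.sum_range_succ,
      Finset.sum_range_succ (n := n),
      Finset.sum_range_succ' _ n]
  have c0 : ((n:ℝ)+1) * ((-1:ℝ)^0 * genBinom ((↑(n+1):ℝ) + α) (n+1-0) * x ^ 0 / ((0:ℕ).factorial : ℝ))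
      = ((n:ℝ)+1+α) * ((-1:ℝ)^0 * genBinom ((n:ℝ) + α) (n-0) * x ^ 0 / ((0:ℕ).factorial : ℝ)) := by
    have key := genBinom_succ ((↑(n+1):ℝ) + α) n
    have e3 : ((↑(n+1):ℝ) + α) - 1 = (n:ℝ) + α := by push_cast; ring
    rw [e3] at key
    simp only [Nat.sub_zero, pow_zero, Nat.factorial_zero]
    push_cast at key ⊢
    linear_combination key
  have ctop : ((n:ℝ)+1) * ((-1:ℝ)^(n+1) * genBinom ((↑(n+1):ℝ) + α) (n+1-(n+1)) * x ^ (n+1) / ((n+1).factorial : ℝ))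
      + x * ((-1:ℝ)^n * genBinom ((n:ℝ) + (α+1)) (n-n) * x ^ n / (n.factorial : ℝ)) = 0 := by
    rw [Nat.sub_self, Nat.sub_self, genBinom_zero, genBinom_zero, Nat.factorial_succ]
    have h0 : ((n.factorial : ℝ)) ≠ 0 := by positivity
    push_cast
    field_simp
    ring
  have cmid : ∀ i ∈ Finset.range n,
      ((n:ℝ)+1) * ((-1:ℝ)^(i+1) * genBinom ((↑(n+1):ℝ) + α) (n+1-(i+1)) * x ^ (i+1) / ((i+1).factorial : ℝ))
      + x * ((-1:ℝ)^i * genBinom ((n:ℝ) + (α+1)) (n-i) * x ^ i / (i.factorial : ℝ))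
      = ((n:ℝ)+1+α) * ((-1:ℝ)^(i+1) * genBinom ((n:ℝ) + α) (n-(i+1)) * x ^ (i+1) / ((i+1).factorial : ℝ)) := by
    intro i hi
    have hi' : i < n := Finset.mem_range.mp hi
    set k := n - 1 - i with hk
    have e1 : n + 1 - (i+1) = k + 1 := by omega
    have e2 : n - i = k + 1 := by omega
    have e3 : n - (i+1) = k := by omega
    have e4 : ((n:ℝ) + (α+1)) = ((↑(n+1):ℝ) + α) := by push_cast; ring
    have key := genBinom_succ ((↑(n+1):ℝ) + α) k
    have e5 : ((↑(n+1):ℝ) + α) - 1 = (n:ℝ) + α := by push_cast; ring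
    rw [e5] at key
    have hn : (n:ℝ) = (k:ℝ) + i + 1 := by
      have : n = k + i + 1 := by omega
      rw [this]; push_cast; ring
    rw [e1, e2, e3, e4, Nat.factorial_succ]
    have hk1 : ((k:ℝ)+1) ≠ 0 := by positivity
    have hG : genBinom ((↑(n+1):ℝ) + α) (k+1)
        = ((n:ℝ)+1+α) * genBinom ((n:ℝ)+α) k / ((k:ℝ)+1) := by
      rw [eq_div_iff hk1]; push_cast at key ⊢; linear_combination key
    rw [hG]
    have h0 : ((i.factorial : ℝ)) ≠ 0 := by positivity
    have hi1 : ((i:ℝ)+1) ≠ 0 := by positivity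
    push_cast
    field_simp
    rw [hn]
    ring
  have hs : (∑ i ∈ Finset.range n,
        ((n:ℝ)+1) * ((-1:ℝ)^(i+1) * genBinom ((↑(n+1):ℝ) + α) (n+1-(i+1)) * x ^ (i+1) / ((i+1).factorial : ℝ)))
      + (∑ i ∈ Finset.range n,
        x * ((-1:ℝ)^i * genBinom ((n:ℝ) + (α+1)) (n-i) * x ^ i / (i.factorial : ℝ)))
      = ∑ i ∈ Finset.range n,
        ((n:ℝ)+1+α) * ((-1:ℝ)^(i+1) * genBinom ((n:ℝ) + α) (n-(i+1)) * x ^ (i+1) / ((i+1).factorial : ℝ)) := by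
    rw [← Finset.sum_add_distrib]
    exact Finset.sum_congr rfl cmid
  linarith [hs, c0, ctop]

lemma lag3 (α x : ℝ) (m : ℕ) :
    ((m:ℝ)+2) * laguerre α (m+2) x
      = (2*(m:ℝ)+3+α-x) * laguerre α (m+1) x - ((m:ℝ)+1+α) * laguerre α m x := by
  have hB1 := lagB α x (m+1)
  have hB0 := lagB α x m
  have hA := lagA α x m
  push_cast at hB1 hB0 hA ⊢
  have e : m + 1 + 1 = m + 2 := rfl
  rw [e] at hB1
  linear_combination hB1 + x * hA - hB0

/-- With `f(n) = L_{n−1}^{(3/2)}(x)` for `n ≥ 1` and `f(0) = 0`, for every `n ≥ 1`,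
`2n[f(n+1) − f(n)] + (2n+1)[f(n−1) − f(n)] = −2x f(n)`: the GW(−1) generator applied
to `f` equals `−2x f`. -/
theorem laguerre_eigenfunction_of_gw_generator
    (x : ℝ) (hx : 0 ≤ x) (f : ℕ → ℝ) (hf0 : f 0 = 0)
    (hf : ∀ n : ℕ, 1 ≤ n → f n = laguerre (3/2) (n - 1) x) :
    ∀ n : ℕ, 1 ≤ n →
      2*(n:ℝ)*(f (n+1) - f n) + (2*(n:ℝ)+1)*(f (n-1) - f n) = -2*x*f n := by
  intro n hn
  match n, hn with
  | 1, _ =>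
    rw [hf 2 (by norm_num), hf 1 (by norm_num)]
    norm_num [hf0, laguerre, genBinom, Finset.sum_range_succ]
    ring
  | (m+2), _ =>
    have h1 : f (m+2+1) = laguerre (3/2) (m+2) x := by
      rw [hf (m+3) (by omega), show m+3-1 = m+2 from rfl]
    have h2 : f (m+2) = laguerre (3/2) (m+1) x := by
      rw [hf (m+2) (by omega), show m+2-1 = m+1 from rfl]
    have h3 : f (m+2-1) = laguerre (3/2) m x := by
      rw [show m+2-1 = m+1 from rfl, hf (m+1) (by omega), show m+1-1 = m from rfl]
    rw [h1, h2, h3]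
    have := lag3 (3/2) x m
    push_cast
    linear_combination 2 * this
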